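/- Fix a row y₀ and write V̂ = V̂_{y₀} = S_{𝟙_{Γ̃_{y₀}}}, and let Ψ = ∑_{k=0}^{M−1} V̂^k Φ_M (the unnormalized ℤ_M topological cat state). Let T ≥ 3, let x_1, …, x_T ∈ ZMod L_x be distinct columns, and let a : Fin T → {0,1,…,M−1} be an input with M dividing ∑_j a_j; set q = (∑_j a_j)/M ∈ ℤ. Then the post-strategy state ψ' = (∏_j Ŵ_{x_j}^{−a_j/M}) Ψ equals ∑_{k=0}^{M−1} ω^{−k·q} V̂^k Φ_M, is nonzero, and satisfies V̂ ψ' = ω^{q} ψ'; hence the quantum strategy wins the ℤ_M toric code game with certainty. -/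

import Mathlib

open Finset

noncomputable section

/-- The qudit Hilbert space: complex functions on configurations `ι → ZMod M`. -/
abbrev QuditSpace (ι : Type*) (M : ℕ) := (ι → ZMod M) → ℂ

/-- The root of unity `ω = exp(2πi/M)`. -/
def omegaM (M : ℕ) : ℂ := Complex.exp (2 * Real.pi * Complex.I / M)

/-- The clock operator `C_u`: `(C_u ψ)(σ) = ω^{∑_b u(b)·σ(b)} ψ(σ)`
(well-defined since `ω^M = 1`). -/
def Cop {ι : Type*} [Fintype ι] {M : ℕ} (u : ι → ZMod M) :
    Module.End ℂ (QuditSpace ι M) where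
  toFun ψ := fun σ => omegaM M ^ (∑ b, u b * σ b).val * ψ σ
  map_add' ψ φ := by funext σ; simp [mul_add]
  map_smul' c ψ := by funext σ; simp; ring

/-- The shift operator `S_u`: `(S_u ψ)(σ) = ψ(σ − u)`. -/
def Sop {ι : Type*} {M : ℕ} (u : ι → ZMod M) :
    Module.End ℂ (QuditSpace ι M) where
  toFun ψ := fun σ => ψ (σ - u)
  map_add' _ _ := rfl
  map_smul' _ _ := rfl

variable (M Lx Ly : ℕ)

/-- Vertices of the `L_x × L_y` square lattice on the torus. -/
abbrev Vertex := ZMod Lx × ZMod Ly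

/-- Bonds of the lattice: `((x,y), 0)` is the horizontal bond from `(x,y)` to
`(x+1,y)`, and `((x,y), 1)` the vertical bond from `(x,y)` to `(x,y+1)`. -/
abbrev Bond := (ZMod Lx × ZMod Ly) × Fin 2

variable [NeZero Lx] [NeZero Ly]

/-- The oriented star vector `u_v`: value `1` on `((x,y),0)` and `((x,y),1)`,
value `−1` on `((x−1,y),0)` and `((x,y−1),1)`, and `0` elsewhere. -/
def starVec (v : Vertex Lx Ly) : Bond Lx Ly → ZMod M := fun b =>
  (if b = (v, 0) then (1 : ZMod M) else 0) + (if b = (v, 1) then 1 else 0) +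
    (if b = ((v.1 - 1, v.2), 0) then -1 else 0) +
    (if b = ((v.1, v.2 - 1), 1) then -1 else 0)

/-- The oriented plaquette vector `w_{(x,y)}`: value `1` on `((x,y),0)` and
`((x+1,y),1)`, value `−1` on `((x,y+1),0)` and `((x,y),1)`, `0` elsewhere. -/
def plaqVec (v : Vertex Lx Ly) : Bond Lx Ly → ZMod M := fun b =>
  (if b = (v, 0) then (1 : ZMod M) else 0) +
    (if b = ((v.1 + 1, v.2), 1) then 1 else 0) +
    (if b = ((v.1, v.2 + 1), 0) then -1 else 0) +
    (if b = (v, 1) then -1 else 0)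

/-- The star operator `B̂_v = S_{u_v}`. -/
def Bhat (v : Vertex Lx Ly) : Module.End ℂ (QuditSpace (Bond Lx Ly) M) :=
  Sop (starVec M Lx Ly v)

/-- The plaquette operator `Â_{(x,y)} = C_{w_{(x,y)}}`. -/
def Ahat (v : Vertex Lx Ly) : Module.End ℂ (QuditSpace (Bond Lx Ly) M) :=
  Cop (plaqVec M Lx Ly v)

/-- The vertical clock Wilson loop `Ŵ_x = C_{𝟙_{Γ_x}}`,
`Γ_x = {((x,y),1) : y}`. -/
def What (x : ZMod Lx) : Module.End ℂ (QuditSpace (Bond Lx Ly) M) :=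
  Cop (fun b => if b.1.1 = x ∧ b.2 = 1 then (1 : ZMod M) else 0)

/-- The horizontal shift (dual) Wilson loop `V̂_y = S_{𝟙_{Γ̃_y}}`,
`Γ̃_y = {((x,y),1) : x}`. -/
def Vhat (y : ZMod Ly) : Module.End ℂ (QuditSpace (Bond Lx Ly) M) :=
  Sop (fun b => if b.1.2 = y ∧ b.2 = 1 then (1 : ZMod M) else 0)

/-- The basis vector at the all-zeros configuration. -/
def delta0M : QuditSpace (Bond Lx Ly) M := fun σ => if σ = 0 then 1 else 0

lemma sop_commute {ι : Type*} {M : ℕ} (u u' : ι → ZMod M) :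
    Commute (Sop u) (Sop u') := by
  apply LinearMap.ext; intro ψ; funext σ
  simp only [Module.End.mul_apply]
  show ψ (σ - u - u') = ψ (σ - u' - u)
  rw [sub_right_comm]

/-- The star projector `(1/M) ∑_{j=0}^{M−1} B̂_v^j`. -/
def starProjM (v : Vertex Lx Ly) :
    Module.End ℂ (QuditSpace (Bond Lx Ly) M) :=
  (M : ℂ)⁻¹ • ∑ j ∈ Finset.range M, (Bhat M Lx Ly v) ^ j

lemma starProjM_commute (v w : Vertex Lx Ly) :
    Commute (starProjM M Lx Ly v) (starProjM M Lx Ly w) := by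
  have h : Commute (Bhat M Lx Ly v) (Bhat M Lx Ly w) := sop_commute _ _
  have h' : Commute (∑ j ∈ Finset.range M, (Bhat M Lx Ly v) ^ j)
      (∑ j ∈ Finset.range M, (Bhat M Lx Ly w) ^ j) :=
    Commute.sum_left _ _ _ (fun j _ =>
      Commute.sum_right _ _ _ (fun k _ => h.pow_pow j k))
  exact (h'.smul_left _).smul_right _

/-- The (unnormalized) `ℤ_M` zero-flux ground state
`Φ_M = (∏_v (1/M) ∑_j B̂_v^j) δ₀` (the star operators commute, so the product
is well-defined). -/
def PhiM : QuditSpace (Bond Lx Ly) M :=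
  (Finset.univ.noncommProd (fun v : Vertex Lx Ly => starProjM M Lx Ly v)
    (fun v _ w _ _ => starProjM_commute M Lx Ly v w)) (delta0M M Lx Ly)

/-- The spectral projector `Π^x_m = (1/M) ∑_{l<M} ω^{−ml} (Ŵ_x)^l` of the
clock Wilson loop `Ŵ_x`. -/
def clockProj (x : ZMod Lx) (m : ℕ) :
    Module.End ℂ (QuditSpace (Bond Lx Ly) M) :=
  (M : ℂ)⁻¹ • ∑ l ∈ Finset.range M, (omegaM M ^ (m * l))⁻¹ • (What M Lx Ly x) ^ l

/-- The fractional power `Ŵ_x^{−a/M} = ∑_{m<M} exp(−2πi·a·m/M²) Π^x_m` used by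
a team holding the input `a`. -/
def WfracNeg (x : ZMod Lx) (a : ℕ) :
    Module.End ℂ (QuditSpace (Bond Lx Ly) M) :=
  ∑ m ∈ Finset.range M,
    Complex.exp (-(2 * Real.pi * Complex.I * a * m) / (M ^ 2 : ℕ)) •
      clockProj M Lx Ly x m


/-! ### Auxiliary lemmas -/

section Aux

lemma omegaM_pow_self {M : ℕ} (hM : M ≠ 0) : omegaM M ^ M = 1 := by
  rw [omegaM, ← Complex.exp_nat_mul]
  rw [show (M : ℂ) * (2 * Real.pi * Complex.I / M) = 2 * Real.pi * Complex.I by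
    rw [mul_div_assoc']; exact mul_div_cancel_left₀ _ (Nat.cast_ne_zero.mpr hM)]
  exact Complex.exp_two_pi_mul_I

lemma omegaM_ne_zero (M : ℕ) : omegaM M ≠ 0 := Complex.exp_ne_zero _

lemma omegaM_pow_val_add {M : ℕ} (hM : M ≠ 0) (z w : ZMod M) :
    omegaM M ^ (z + w).val = omegaM M ^ z.val * omegaM M ^ w.val := by
  haveI : NeZero M := ⟨hM⟩
  have h : (z.val + w.val) % M = (z + w).val := by
    rw [← ZMod.val_add]
  rw [← pow_add, ← h]
  conv_rhs => rw [← Nat.mod_add_div (z.val + w.val) M]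
  rw [pow_add, pow_mul, omegaM_pow_self hM, one_pow, mul_one]

lemma sop_mul {ι : Type*} {M : ℕ} (u w : ι → ZMod M) :
    Sop u * Sop w = Sop (u + w) := by
  apply LinearMap.ext; intro ψ; funext σ
  show ψ (σ - u - w) = ψ (σ - (u + w))
  rw [sub_sub]

lemma sop_zero {ι : Type*} {M : ℕ} : Sop (0 : ι → ZMod M) = 1 := by
  apply LinearMap.ext; intro ψ; funext σ
  show ψ (σ - 0) = ψ σ
  rw [sub_zero]

lemma sop_pow {ι : Type*} {M : ℕ} (u : ι → ZMod M) (k : ℕ) :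
    (Sop u) ^ k = Sop (k • u) := by
  induction k with
  | zero => simp [sop_zero]
  | succ n ih => rw [pow_succ, ih, sop_mul, succ_nsmul]

lemma cop_sop {ι : Type*} [Fintype ι] {M : ℕ} (hM : M ≠ 0) (u w : ι → ZMod M)
    (ψ : QuditSpace ι M) :
    Cop u (Sop w ψ) = omegaM M ^ (∑ b, u b * w b).val • Sop w (Cop u ψ) := by
  funext σ
  show omegaM M ^ (∑ b, u b * σ b).val * ψ (σ - w)
      = omegaM M ^ (∑ b, u b * w b).val *
        (omegaM M ^ (∑ b, u b * (σ - w) b).val * ψ (σ - w))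
  have hs : (∑ b, u b * σ b) = (∑ b, u b * w b) + (∑ b, u b * (σ - w) b) := by
    rw [← Finset.sum_add_distrib]
    apply Finset.sum_congr rfl; intro b _
    simp only [Pi.sub_apply, mul_sub]; ring
  rw [hs, omegaM_pow_val_add hM, mul_assoc]

end Aux

section Aux2
variable {M Lx Ly : ℕ} [NeZero Lx] [NeZero Ly]

lemma cop_sop_comm {ι : Type*} [Fintype ι] {M : ℕ} (hM : M ≠ 0) (u w : ι → ZMod M)
    (h : ∑ b, u b * w b = 0) : Commute (Cop u) (Sop w) := by
  haveI : NeZero M := ⟨hM⟩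
  apply LinearMap.ext; intro ψ
  show Cop u (Sop w ψ) = Sop w (Cop u ψ)
  rw [cop_sop hM, h]
  simp

lemma cop_delta0 (u : Bond Lx Ly → ZMod M) :
    Cop u (delta0M M Lx Ly) = delta0M M Lx Ly := by
  funext σ
  show omegaM M ^ (∑ b, u b * σ b).val * (if σ = 0 then 1 else 0)
      = (if σ = 0 then 1 else 0)
  by_cases h : σ = 0
  · subst h; simp
  · simp [h]

lemma crossing_star (x : ZMod Lx) (v : Vertex Lx Ly) :
    ∑ b, (if b.1.1 = x ∧ b.2 = 1 then (1 : ZMod M) else 0) * starVec M Lx Ly v b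
      = 0 := by
  simp only [starVec, mul_add, Finset.sum_add_distrib, mul_ite, mul_one, mul_zero,
    mul_neg, Finset.sum_ite_eq', Finset.mem_univ, if_true]
  by_cases h : v.1 = x <;> simp [h]

lemma crossing_loop (x : ZMod Lx) (y₀ : ZMod Ly) (k : ℕ) :
    ∑ b, (if b.1.1 = x ∧ b.2 = 1 then (1 : ZMod M) else 0) *
      (k • fun b : Bond Lx Ly => if b.1.2 = y₀ ∧ b.2 = 1 then (1 : ZMod M) else 0) b
      = (k : ZMod M) := by
  have key : ∀ b : Bond Lx Ly,
      (if b.1.1 = x ∧ b.2 = 1 then (1 : ZMod M) else 0) *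
        (k • fun b : Bond Lx Ly => if b.1.2 = y₀ ∧ b.2 = 1 then (1 : ZMod M) else 0) b
      = if b = ((x, y₀), 1) then (k : ZMod M) else 0 := by
    intro b
    by_cases h1 : b.1.1 = x <;> by_cases h2 : b.1.2 = y₀ <;> by_cases h3 : b.2 = 1 <;>
      simp [Prod.ext_iff, h1, h2, h3, nsmul_eq_mul]
  rw [Finset.sum_congr rfl (fun b _ => key b)]
  simp

end Aux2

section Aux3
variable {M Lx Ly : ℕ} [NeZero Lx] [NeZero Ly]

lemma what_phiM (hM : M ≠ 0) (x : ZMod Lx) :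
    What M Lx Ly x (PhiM M Lx Ly) = PhiM M Lx Ly := by
  have hc : ∀ v : Vertex Lx Ly,
      Commute (What M Lx Ly x) (starProjM M Lx Ly v) := by
    intro v
    have h0 : Commute (What M Lx Ly x) (Bhat M Lx Ly v) :=
      cop_sop_comm hM _ _ (crossing_star x v)
    have h1 : Commute (What M Lx Ly x) (∑ j ∈ Finset.range M, (Bhat M Lx Ly v) ^ j) :=
      Commute.sum_right _ _ _ (fun j _ => h0.pow_right j)
    exact h1.smul_right _
  have hP := Finset.noncommProd_commute
      (Finset.univ : Finset (Vertex Lx Ly)) (fun v => starProjM M Lx Ly v)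
      (fun v _ w _ _ => starProjM_commute M Lx Ly v w) (What M Lx Ly x)
      (fun v _ => hc v)
  have := congrArg (fun f : Module.End ℂ (QuditSpace (Bond Lx Ly) M) =>
    f (delta0M M Lx Ly)) hP.eq
  simp only [Module.End.mul_apply] at this
  rw [PhiM, this, show What M Lx Ly x (delta0M M Lx Ly) = delta0M M Lx Ly from
    cop_delta0 _]

lemma what_vhat_phiM (hM : M ≠ 0) (x : ZMod Lx) (y₀ : ZMod Ly) {k : ℕ} (hk : k < M) :
    What M Lx Ly x (((Vhat M Lx Ly y₀) ^ k) (PhiM M Lx Ly))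
      = omegaM M ^ k • ((Vhat M Lx Ly y₀) ^ k) (PhiM M Lx Ly) := by
  haveI : NeZero M := ⟨hM⟩
  rw [Vhat, sop_pow, What]
  rw [cop_sop hM, crossing_loop, ZMod.val_cast_of_lt hk]
  rw [show Cop (fun b : Bond Lx Ly => if b.1.1 = x ∧ b.2 = 1 then (1 : ZMod M) else 0)
      (PhiM M Lx Ly) = PhiM M Lx Ly from what_phiM hM x]

lemma pow_eigen {H : Type*} [AddCommGroup H] [Module ℂ H] (A : Module.End ℂ H)
    (v : H) (c : ℂ) (h : A v = c • v) : ∀ l : ℕ, (A ^ l) v = c ^ l • v := by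
  intro l
  induction l with
  | zero => simp
  | succ n ih =>
      rw [pow_succ', Module.End.mul_apply, ih, map_smul, h, smul_smul, pow_succ]

lemma clockProj_eigen (hM : M ≠ 0) {m k : ℕ} (hm : m < M) (hk : k < M)
    (x : ZMod Lx) (y₀ : ZMod Ly) :
    clockProj M Lx Ly x m (((Vhat M Lx Ly y₀) ^ k) (PhiM M Lx Ly))
      = (if m = k then (1 : ℂ) else 0) • ((Vhat M Lx Ly y₀) ^ k) (PhiM M Lx Ly) := by
  set v := ((Vhat M Lx Ly y₀) ^ k) (PhiM M Lx Ly) with hv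
  have heig := pow_eigen (What M Lx Ly x) v (omegaM M ^ k)
    (what_vhat_phiM hM x y₀ hk)
  have expand : clockProj M Lx Ly x m v
      = ((M : ℂ)⁻¹ * ∑ l ∈ Finset.range M,
          (omegaM M ^ (m * l))⁻¹ * (omegaM M ^ k) ^ l) • v := by
    rw [clockProj, LinearMap.smul_apply, LinearMap.sum_apply]
    rw [Finset.sum_congr rfl (fun l _ => by
      rw [LinearMap.smul_apply, heig l, smul_smul])]
    rw [← Finset.sum_smul, smul_smul]
  rw [expand]
  congr 1
  have hζ : ∀ l, (omegaM M ^ (m * l))⁻¹ * (omegaM M ^ k) ^ l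
      = ((omegaM M ^ m)⁻¹ * omegaM M ^ k) ^ l := by
    intro l
    rw [mul_pow, pow_mul, inv_pow]
  rw [Finset.sum_congr rfl (fun l _ => hζ l)]
  by_cases hmk : m = k
  · subst hmk
    rw [inv_mul_cancel₀ (pow_ne_zero _ (omegaM_ne_zero M))]
    simp [inv_mul_cancel₀ (Nat.cast_ne_zero.mpr (hM : M ≠ 0) : (M:ℂ) ≠ 0)]
  · rw [if_neg hmk]
    have hprim := Complex.isPrimitiveRoot_exp M hM
    have hζ1 : (omegaM M ^ m)⁻¹ * omegaM M ^ k ≠ 1 := by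
      intro hcon
      apply hmk
      apply hprim.pow_inj hm hk
      rw [inv_mul_eq_one₀ (pow_ne_zero _ (omegaM_ne_zero M))] at hcon
      exact hcon
    have hζM : ((omegaM M ^ m)⁻¹ * omegaM M ^ k) ^ M = 1 := by
      rw [mul_pow, inv_pow, ← pow_mul, ← pow_mul, mul_comm m M, mul_comm k M,
        pow_mul, pow_mul, omegaM_pow_self hM, one_pow, one_pow, inv_one, one_mul]
    rw [geom_sum_eq hζ1, hζM, sub_self, zero_div, mul_zero]

end Aux3

section Aux4
variable {M Lx Ly : ℕ} [NeZero Lx] [NeZero Ly]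

lemma wfrac_eigen (hM : M ≠ 0) {k : ℕ} (hk : k < M) (x : ZMod Lx) (y₀ : ZMod Ly)
    (a : ℕ) :
    WfracNeg M Lx Ly x a (((Vhat M Lx Ly y₀) ^ k) (PhiM M Lx Ly))
      = Complex.exp (-(2 * Real.pi * Complex.I * a * k) / ((M ^ 2 : ℕ) : ℂ)) •
        ((Vhat M Lx Ly y₀) ^ k) (PhiM M Lx Ly) := by
  rw [WfracNeg, LinearMap.sum_apply]
  rw [Finset.sum_congr rfl (fun m hm => by
    rw [LinearMap.smul_apply, clockProj_eigen hM (Finset.mem_range.mp hm) hk x y₀,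
      smul_smul])]
  rw [Finset.sum_eq_single k]
  · rw [if_pos rfl, mul_one]
  · intro m _ hne; rw [if_neg hne, mul_zero, zero_smul]
  · intro h; exact absurd (Finset.mem_range.mpr hk) h

lemma list_prod_eigen {H : Type*} [AddCommGroup H] [Module ℂ H] :
    ∀ (n : ℕ) (g : Fin n → Module.End ℂ H) (c : Fin n → ℂ) (v : H),
    (∀ j, g j v = c j • v) →
    (List.ofFn g).prod v = (∏ j, c j) • v := by
  intro n
  induction n with
  | zero => intro g c v _; simp
  | succ n ih =>
      intro g c v h
      rw [List.ofFn_succ, List.prod_cons, Module.End.mul_apply,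
        ih (fun j => g j.succ) (fun j => c j.succ) v (fun j => h j.succ),
        map_smul, h 0, smul_smul, Fin.prod_univ_succ, mul_comm]

lemma vhat_pow_M (hM : M ≠ 0) (y₀ : ZMod Ly) :
    (Vhat M Lx Ly y₀ : Module.End ℂ (QuditSpace (Bond Lx Ly) M)) ^ M = 1 := by
  haveI : NeZero M := ⟨hM⟩
  rw [Vhat, sop_pow, show (M • fun b : Bond Lx Ly =>
      if b.1.2 = y₀ ∧ b.2 = 1 then (1 : ZMod M) else 0) = 0 from ?_, sop_zero]
  funext b
  simp [nsmul_eq_mul, ZMod.natCast_self]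

end Aux4

section Aux5
variable {M Lx Ly : ℕ} [NeZero Lx] [NeZero Ly]

lemma starProjM_apply (v : Vertex Lx Ly) (ψ : QuditSpace (Bond Lx Ly) M)
    (σ : Bond Lx Ly → ZMod M) :
    starProjM M Lx Ly v ψ σ
      = (M : ℂ)⁻¹ * ∑ j ∈ Finset.range M, ψ (σ - j • starVec M Lx Ly v) := by
  rw [starProjM, LinearMap.smul_apply, LinearMap.sum_apply]
  simp only [Pi.smul_apply, smul_eq_mul]
  congr 1
  rw [Finset.sum_apply]
  apply Finset.sum_congr rfl
  intro j _
  rw [Bhat, sop_pow]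
  rfl

lemma starProjM_pres (hM : M ≠ 0) (v : Vertex Lx Ly) (ψ : QuditSpace (Bond Lx Ly) M)
    (h1 : ∀ σ, 0 ≤ (ψ σ).re ∧ (ψ σ).im = 0) :
    (∀ σ, 0 ≤ ((starProjM M Lx Ly v ψ) σ).re ∧ ((starProjM M Lx Ly v ψ) σ).im = 0)
    ∧ (M : ℝ)⁻¹ * (ψ 0).re ≤ ((starProjM M Lx Ly v ψ) 0).re := by
  have hcast : (M : ℂ)⁻¹ = (((M : ℝ)⁻¹ : ℝ) : ℂ) := by push_cast; ring
  have hre : ∀ σ : Bond Lx Ly → ZMod M, ((starProjM M Lx Ly v ψ) σ).re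
      = (M : ℝ)⁻¹ * ∑ j ∈ Finset.range M, (ψ (σ - j • starVec M Lx Ly v)).re := by
    intro σ
    rw [starProjM_apply, hcast, Complex.re_ofReal_mul, Complex.re_sum]
  have him : ∀ σ : Bond Lx Ly → ZMod M, ((starProjM M Lx Ly v ψ) σ).im = 0 := by
    intro σ
    rw [starProjM_apply, hcast, Complex.im_ofReal_mul, Complex.im_sum]
    rw [Finset.sum_eq_zero (fun j _ => (h1 _).2), mul_zero]
  have hMpos : (0 : ℝ) < (M : ℝ)⁻¹ :=
    inv_pos.mpr (Nat.cast_pos.mpr (Nat.pos_of_ne_zero hM))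
  refine ⟨fun σ => ⟨?_, him σ⟩, ?_⟩
  · rw [hre]
    exact mul_nonneg hMpos.le
      (Finset.sum_nonneg (fun j _ => (h1 _).1))
  · rw [hre]
    apply mul_le_mul_of_nonneg_left _ hMpos.le
    have h0 : (0 : Bond Lx Ly → ZMod M) - (0 : ℕ) • starVec M Lx Ly v = 0 := by
      simp
    calc (ψ 0).re = (ψ ((0 : Bond Lx Ly → ZMod M) - (0:ℕ) • starVec M Lx Ly v)).re := by
          rw [h0]
      _ ≤ _ := Finset.single_le_sum
          (f := fun j : ℕ => (ψ ((0 : Bond Lx Ly → ZMod M) - j • starVec M Lx Ly v)).re)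
          (fun j _ => (h1 _).1) (Finset.mem_range.mpr (Nat.pos_of_ne_zero hM))

lemma phiM_pos (hM : M ≠ 0) : 0 < ((PhiM M Lx Ly) 0).re := by
  suffices h : ∀ s : Finset (Vertex Lx Ly),
      (∀ σ, 0 ≤ ((s.noncommProd (fun v => starProjM M Lx Ly v)
          (fun v _ w _ _ => starProjM_commute M Lx Ly v w) (delta0M M Lx Ly)) σ).re ∧
        ((s.noncommProd (fun v => starProjM M Lx Ly v)
          (fun v _ w _ _ => starProjM_commute M Lx Ly v w) (delta0M M Lx Ly)) σ).im = 0) ∧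
      0 < ((s.noncommProd (fun v => starProjM M Lx Ly v)
          (fun v _ w _ _ => starProjM_commute M Lx Ly v w) (delta0M M Lx Ly)) 0).re by
    exact (h Finset.univ).2
  intro s
  induction s using Finset.induction_on with
  | empty =>
      constructor
      · intro σ
        show (0:ℝ) ≤ ((delta0M M Lx Ly) σ).re ∧ ((delta0M M Lx Ly) σ).im = 0
        by_cases h : σ = 0 <;> simp [delta0M, h]
      · show (0:ℝ) < ((delta0M M Lx Ly) 0).re
        simp [delta0M]
  | @insert a s ha ih =>
      erw [Finset.noncommProd_insert_of_notMem _ _ _ _ ha]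
      simp only [Module.End.mul_apply]
      obtain ⟨hgood, hpos⟩ := ih
      obtain ⟨hg, hle⟩ := starProjM_pres hM a _ hgood
      refine ⟨hg, lt_of_lt_of_le ?_ hle⟩
      exact mul_pos (inv_pos.mpr (Nat.cast_pos.mpr (Nat.pos_of_ne_zero hM))) hpos

end Aux5

/-- with `V̂ = V̂_{y₀}` and the unnormalized `ℤ_M` topological cat
state `Ψ = ∑_{k<M} V̂^k Φ_M`, for any `T ≥ 3`, distinct columns `x_1, …, x_T`
and input `a : Fin T → {0,…,M−1}` with `M ∣ ∑_j a_j` and `q = (∑_j a_j)/M`,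
the post-strategy state `ψ' = (∏_j Ŵ_{x_j}^{−a_j/M}) Ψ` equals
`∑_{k<M} ω^{−kq} V̂^k Φ_M`, is nonzero, and satisfies `V̂ ψ' = ω^q ψ'`; hence
the quantum strategy wins the `ℤ_M` toric code game with certainty. -/
theorem ZM_toric_code_strategy_wins (M Lx Ly : ℕ) [NeZero Lx] [NeZero Ly]
    (hM : 2 ≤ M) (hLx : 2 ≤ Lx) (hLy : 2 ≤ Ly) (y₀ : ZMod Ly)
    (T : ℕ) (hT : 3 ≤ T) (x : Fin T → ZMod Lx) (hx : Function.Injective x)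
    (a : Fin T → ℕ) (ha : ∀ j, a j < M) (hdvd : M ∣ ∑ j, a j) :
    let q : ℕ := (∑ j, a j) / M
    let Ψ : QuditSpace (Bond Lx Ly) M :=
      ∑ k ∈ Finset.range M, ((Vhat M Lx Ly y₀) ^ k) (PhiM M Lx Ly)
    let ψ' : QuditSpace (Bond Lx Ly) M :=
      ((List.ofFn fun j => WfracNeg M Lx Ly (x j) (a j)).prod) Ψ
    ψ' = ∑ k ∈ Finset.range M,
          (omegaM M ^ (k * q))⁻¹ • ((Vhat M Lx Ly y₀) ^ k) (PhiM M Lx Ly) ∧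
      ψ' ≠ 0 ∧
      Vhat M Lx Ly y₀ ψ' = (omegaM M ^ q) • ψ' := by
  intro q Ψ ψ'
  have hM0 : M ≠ 0 := by omega
  haveI : NeZero M := ⟨hM0⟩
  have hMc : (M : ℂ) ≠ 0 := Nat.cast_ne_zero.mpr hM0
  have hq : ∑ j, a j = M * q := (Nat.mul_div_cancel' hdvd).symm
  set F : ℕ → QuditSpace (Bond Lx Ly) M :=
    fun k => (omegaM M ^ (k * q))⁻¹ • ((Vhat M Lx Ly y₀) ^ k) (PhiM M Lx Ly)
    with hFdef
  -- coefficient identity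
  have hcoef : ∀ k : ℕ,
      (∏ j : Fin T, Complex.exp (-(2 * Real.pi * Complex.I * (a j) * k)
        / ((M ^ 2 : ℕ) : ℂ))) = (omegaM M ^ (k * q))⁻¹ := by
    intro k
    rw [← Complex.exp_sum, omegaM, ← Complex.exp_nat_mul, ← Complex.exp_neg]
    congr 1
    have h1 : -(2 * (Real.pi : ℂ) * Complex.I * ((∑ j, a j : ℕ) : ℂ) * k)
        = ∑ j : Fin T, -(2 * (Real.pi : ℂ) * Complex.I * (a j) * k) := by
      rw [Nat.cast_sum, Finset.mul_sum, Finset.sum_mul, ← Finset.sum_neg_distrib]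
    rw [← Finset.sum_div, ← h1, hq]
    push_cast
    field_simp
  -- product action on eigenvectors
  have hprod : ∀ k ∈ Finset.range M,
      (List.ofFn fun j => WfracNeg M Lx Ly (x j) (a j)).prod
        (((Vhat M Lx Ly y₀) ^ k) (PhiM M Lx Ly)) = F k := by
    intro k hk
    rw [list_prod_eigen T _
      (fun j => Complex.exp (-(2 * Real.pi * Complex.I * (a j) * k) / ((M ^ 2 : ℕ) : ℂ)))
      _ (fun j => wfrac_eigen hM0 (Finset.mem_range.mp hk) (x j) y₀ (a j)),
      hcoef k]
  have hψ' : ψ' = ∑ k ∈ Finset.range M, F k := by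
    show (List.ofFn fun j => WfracNeg M Lx Ly (x j) (a j)).prod Ψ = _
    rw [show Ψ = ∑ k ∈ Finset.range M, ((Vhat M Lx Ly y₀) ^ k) (PhiM M Lx Ly) from rfl,
      map_sum]
    exact Finset.sum_congr rfl hprod
  refine ⟨hψ', ?_, ?_⟩
  · -- nonzero
    have hterm0 : ∀ k ∈ Finset.range M,
        clockProj M Lx Ly (x ⟨0, by omega⟩) 0 (F k)
          = if k = 0 then PhiM M Lx Ly else 0 := by
      intro k hk
      rw [hFdef]
      simp only []
      rw [map_smul, clockProj_eigen hM0 (Nat.pos_of_ne_zero hM0)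
        (Finset.mem_range.mp hk) (x ⟨0, by omega⟩) y₀]
      by_cases hk0 : k = 0
      · subst hk0
        simp
      · rw [if_neg (fun h => hk0 h.symm), if_neg hk0, zero_smul, smul_zero]
    have hW0 : clockProj M Lx Ly (x ⟨0, by omega⟩) 0 ψ' = PhiM M Lx Ly := by
      rw [hψ', map_sum, Finset.sum_congr rfl hterm0, Finset.sum_ite_eq',
        if_pos (Finset.mem_range.mpr (Nat.pos_of_ne_zero hM0))]
    intro h0
    have h1 := hW0
    rw [h0, map_zero] at h1
    have hpos := phiM_pos (M := M) (Lx := Lx) (Ly := Ly) hM0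
    rw [← h1] at hpos
    simp at hpos
  · -- eigenvalue of Vhat
    rw [hψ', map_sum]
    have hterm : ∀ k, Vhat M Lx Ly y₀ (F k) = omegaM M ^ q • F (k + 1) := by
      intro k
      rw [hFdef]
      simp only []
      rw [map_smul, smul_smul]
      have hpow : Vhat M Lx Ly y₀ (((Vhat M Lx Ly y₀) ^ k) (PhiM M Lx Ly))
          = ((Vhat M Lx Ly y₀) ^ (k + 1)) (PhiM M Lx Ly) := by
        rw [pow_succ', Module.End.mul_apply]
      rw [hpow]
      congr 1
      rw [add_mul, one_mul, pow_add, mul_inv, ← mul_assoc,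
        mul_comm (omegaM M ^ q) ((omegaM M ^ (k * q))⁻¹), mul_assoc,
        mul_inv_cancel₀ (pow_ne_zero _ (omegaM_ne_zero M)), mul_one]
    rw [Finset.sum_congr rfl (fun k _ => hterm k), ← Finset.smul_sum]
    congr 1
    have hFM : F M = F 0 := by
      rw [hFdef]
      simp only []
      rw [vhat_pow_M hM0, pow_mul, omegaM_pow_self hM0, one_pow, inv_one, one_smul,
        pow_zero, Module.End.one_apply, Nat.zero_mul, pow_zero, inv_one, one_smul]
    have e1 : ∑ k ∈ Finset.range M, F (k + 1) + F 0
        = ∑ k ∈ Finset.range M, F k + F M := by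
      rw [← Finset.sum_range_succ', Finset.sum_range_succ]
    rw [hFM] at e1
    exact add_right_cancel e1
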